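/- For all n ≥ 1, the type B Eulerian polynomial B_n(x) admits the gamma-expansion B_n(x) = Σ_{k=0}^{⌊n/2⌋} b(n,k) x^k (1+x)^{n−2k}, where b(n,k) satisfies b(n,k) = (2k+1)b(n−1,k) + 4(n+1−2k)b(n−1,k−1) with b(1,0)=1 and b(1,k)=0 for k ≥ 1. -/

import Mathlib

open Finset
open scoped Classical

/-- The window value of the signed permutation given by the pair `(σ, ε)`
(every signed permutation of `{±1,…,±n}` is uniquely of this form):
at position `i` (0-indexed) the value is `±(σ(i)+1)`, with sign given by `ε i`. -/
def signedVal (n : ℕ) (σ : Equiv.Perm (Fin n)) (ε : Fin n → Bool) (i : Fin n) : ℤ :=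
  if ε i then -((σ i : ℤ) + 1) else (σ i : ℤ) + 1

/-- The type `B` descent number: `#{i ∈ {0,…,n−1} : π(i) > π(i+1)}` where `π(0) = 0`. -/
noncomputable def desB (n : ℕ) (σ : Equiv.Perm (Fin n)) (ε : Fin n → Bool) : ℕ :=
  letI := Classical.propDecidable
  (Finset.univ.filter
    (fun i : Fin n =>
      (if h : (i : ℕ) = 0 then (0 : ℤ)
        else signedVal n σ ε ⟨(i : ℕ) - 1, lt_of_le_of_lt (Nat.sub_le _ _) i.2⟩)
        > signedVal n σ ε i)).card

def prevV (n : ℕ) (σ : Equiv.Perm (Fin n)) (ε : Fin n → Bool) (i : Fin n) : ℤ :=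
  if h : (i : ℕ) = 0 then (0 : ℤ)
    else signedVal n σ ε ⟨(i : ℕ) - 1, lt_of_le_of_lt (Nat.sub_le _ _) i.2⟩

def dsc (n : ℕ) (σ : Equiv.Perm (Fin n)) (ε : Fin n → Bool) (i : Fin n) : Prop :=
  prevV n σ ε i > signedVal n σ ε i

lemma desB_eq_sum (n : ℕ) (σ : Equiv.Perm (Fin n)) (ε : Fin n → Bool) :
    letI := Classical.propDecidable
    desB n σ ε = ∑ i : Fin n, if dsc n σ ε i then 1 else 0 := by
  letI := Classical.propDecidable
  rw [desB, Finset.card_filter]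
  unfold dsc prevV
  exact Finset.sum_congr rfl fun i _ => by congr

lemma signedVal_le (n : ℕ) (σ : Equiv.Perm (Fin n)) (ε : Fin n → Bool) (i : Fin n) :
    signedVal n σ ε i ≤ n ∧ -(n:ℤ) ≤ signedVal n σ ε i := by
  have h2 : ((σ i : ℕ) : ℤ) + 1 ≤ n := by
    have := (σ i).2; omega
  unfold signedVal
  split <;> omega

def insP (m : ℕ) (p : Fin (m+1)) (σ : Equiv.Perm (Fin m)) : Equiv.Perm (Fin (m+1)) :=
  (finSuccEquiv' p).trans ((Equiv.optionCongr σ).trans (finSuccEquiv' (Fin.last m)).symm)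

def insE (m : ℕ) (p : Fin (m+1)) (s : Bool) (ε : Fin m → Bool) : Fin (m+1) → Bool :=
  fun i => ((finSuccEquiv' p) i).elim s ε

@[simp] lemma insP_self (m : ℕ) (p : Fin (m+1)) (σ : Equiv.Perm (Fin m)) :
    insP m p σ p = Fin.last m := by
  simp [insP, finSuccEquiv'_at, finSuccEquiv'_symm_none]

@[simp] lemma insP_succAbove (m : ℕ) (p : Fin (m+1)) (σ : Equiv.Perm (Fin m)) (j : Fin m) :
    insP m p σ (p.succAbove j) = Fin.castSucc (σ j) := by
  simp only [insP, Equiv.trans_apply, finSuccEquiv'_succAbove, Equiv.optionCongr_apply,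
    Option.map_some, finSuccEquiv'_symm_some]
  rw [Fin.succAbove_last]

@[simp] lemma insE_self (m : ℕ) (p : Fin (m+1)) (s : Bool) (ε : Fin m → Bool) :
    insE m p s ε p = s := by
  simp [insE, finSuccEquiv'_at]

@[simp] lemma insE_succAbove (m : ℕ) (p : Fin (m+1)) (s : Bool) (ε : Fin m → Bool) (j : Fin m) :
    insE m p s ε (p.succAbove j) = ε j := by
  simp [insE, finSuccEquiv'_succAbove]

@[simp] lemma sv_ins_self (m : ℕ) (p : Fin (m+1)) (s : Bool) (σ : Equiv.Perm (Fin m))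
    (ε : Fin m → Bool) :
    signedVal (m+1) (insP m p σ) (insE m p s ε) p
      = if s then -((m:ℤ)+1) else (m:ℤ)+1 := by
  simp [signedVal, Fin.val_last]

@[simp] lemma sv_ins_succAbove (m : ℕ) (p : Fin (m+1)) (s : Bool) (σ : Equiv.Perm (Fin m))
    (ε : Fin m → Bool) (j : Fin m) :
    signedVal (m+1) (insP m p σ) (insE m p s ε) (p.succAbove j) = signedVal m σ ε j := by
  simp [signedVal]

lemma succAbove_val_lt (m : ℕ) (p : Fin (m+1)) (j : Fin m) (h : (j:ℕ) < (p:ℕ)) :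
    ((p.succAbove j : Fin (m+1)) : ℕ) = (j:ℕ) := by
  rw [Fin.succAbove_of_castSucc_lt p j (by simpa [Fin.lt_def] using h)]
  rfl

lemma succAbove_val_ge (m : ℕ) (p : Fin (m+1)) (j : Fin m) (h : (p:ℕ) ≤ (j:ℕ)) :
    ((p.succAbove j : Fin (m+1)) : ℕ) = (j:ℕ) + 1 := by
  rw [Fin.succAbove_of_le_castSucc p j (by simpa [Fin.le_def] using h)]
  rfl

/-- previous value is unchanged at non `p`-adjacent positions -/
lemma prevV_ins_succAbove (m : ℕ) (p : Fin (m+1)) (s : Bool) (σ : Equiv.Perm (Fin m))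
    (ε : Fin m → Bool) (j : Fin m) (hne : (j:ℕ) ≠ (p:ℕ)) :
    prevV (m+1) (insP m p σ) (insE m p s ε) (p.succAbove j) = prevV m σ ε j := by
  rcases Nat.lt_or_ge (j:ℕ) (p:ℕ) with h | h
  · -- i = castSucc j, val j
    have hv := succAbove_val_lt m p j h
    unfold prevV
    rcases Nat.eq_zero_or_pos (j:ℕ) with h0 | h0
    · rw [dif_pos (by omega), dif_pos h0]
    · rw [dif_neg (by omega), dif_neg (by omega)]
      have hj : (j:ℕ) - 1 < m := by omega
      have h1 : ((p.succAbove ⟨(j:ℕ) - 1, hj⟩ : Fin (m+1)) : ℕ) = (j:ℕ) - 1 :=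
        succAbove_val_lt m p _ (show (j:ℕ) - 1 < (p:ℕ) by omega)
      have he : (⟨((p.succAbove j : Fin (m+1)) : ℕ) - 1,
          lt_of_le_of_lt (Nat.sub_le _ _) (p.succAbove j).2⟩ : Fin (m+1))
          = p.succAbove ⟨(j:ℕ) - 1, hj⟩ := by
        apply Fin.ext
        show ((p.succAbove j : Fin (m+1)) : ℕ) - 1 = _
        rw [h1, hv]
      rw [he, sv_ins_succAbove]
  ·
    have hgt : (p:ℕ) < (j:ℕ) := lt_of_le_of_ne h (Ne.symm hne)
    have hv := succAbove_val_ge m p j h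
    unfold prevV
    rw [dif_neg (by omega), dif_neg (by omega)]
    have hj : (j:ℕ) - 1 < m := by omega
    have h1 : ((p.succAbove ⟨(j:ℕ) - 1, hj⟩ : Fin (m+1)) : ℕ) = ((j:ℕ) - 1) + 1 :=
      succAbove_val_ge m p _ (show (p:ℕ) ≤ (j:ℕ) - 1 by omega)
    have he : (⟨((p.succAbove j : Fin (m+1)) : ℕ) - 1,
        lt_of_le_of_lt (Nat.sub_le _ _) (p.succAbove j).2⟩ : Fin (m+1))
        = p.succAbove ⟨(j:ℕ) - 1, hj⟩ := by
      apply Fin.ext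
      show ((p.succAbove j : Fin (m+1)) : ℕ) - 1 = _
      rw [h1, hv]
      omega
    rw [he, sv_ins_succAbove]

lemma prevV_ins_succAbove_eq (m : ℕ) (p : Fin (m+1)) (s : Bool) (σ : Equiv.Perm (Fin m))
    (ε : Fin m → Bool) (j : Fin m) (heq : (j:ℕ) = (p:ℕ)) :
    prevV (m+1) (insP m p σ) (insE m p s ε) (p.succAbove j)
      = (if s then -((m:ℤ)+1) else (m:ℤ)+1) := by
  have hv := succAbove_val_ge m p j (le_of_eq heq.symm)
  unfold prevV
  rw [dif_neg (by omega)]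
  have he : (⟨((p.succAbove j : Fin (m+1)) : ℕ) - 1,
      lt_of_le_of_lt (Nat.sub_le _ _) (p.succAbove j).2⟩ : Fin (m+1)) = p := by
    apply Fin.ext
    show ((p.succAbove j : Fin (m+1)) : ℕ) - 1 = _
    rw [hv]; omega
  rw [he, sv_ins_self]

lemma prevV_ins_self (m : ℕ) (p : Fin (m+1)) (s : Bool) (σ : Equiv.Perm (Fin m))
    (ε : Fin m → Bool) (h : (p:ℕ) < m) :
    prevV (m+1) (insP m p σ) (insE m p s ε) p = prevV m σ ε ⟨(p:ℕ), h⟩ := by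
  unfold prevV
  rcases Nat.eq_zero_or_pos (p:ℕ) with h0 | h0
  · rw [dif_pos h0, dif_pos h0]
  · rw [dif_neg (show ¬((p:ℕ) = 0) by omega),
      dif_neg (show ¬(((⟨(p:ℕ), h⟩ : Fin m) : ℕ) = 0) from (by omega : ¬((p:ℕ) = 0)))]
    have hj : (p:ℕ) - 1 < m := by omega
    have h1 : ((p.succAbove ⟨(p:ℕ) - 1, hj⟩ : Fin (m+1)) : ℕ) = (p:ℕ) - 1 :=
      succAbove_val_lt m p _ (show (p:ℕ) - 1 < (p:ℕ) by omega)
    have he : (⟨(p:ℕ) - 1, lt_of_le_of_lt (Nat.sub_le _ _) p.2⟩ : Fin (m+1))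
        = p.succAbove ⟨(p:ℕ) - 1, hj⟩ := by
      apply Fin.ext
      show (p:ℕ) - 1 = _
      rw [h1]
    rw [he, sv_ins_succAbove]

lemma prevV_bound (n : ℕ) (σ : Equiv.Perm (Fin n)) (ε : Fin n → Bool) (i : Fin n) :
    prevV n σ ε i ≤ n ∧ -(n:ℤ) ≤ prevV n σ ε i := by
  unfold prevV
  split
  · constructor <;> omega
  · exact signedVal_le n σ ε _

lemma prevV_ins_self_bound (m : ℕ) (p : Fin (m+1)) (s : Bool) (σ : Equiv.Perm (Fin m))
    (ε : Fin m → Bool) :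
    prevV (m+1) (insP m p σ) (insE m p s ε) p ≤ m ∧
      -(m:ℤ) ≤ prevV (m+1) (insP m p σ) (insE m p s ε) p := by
  unfold prevV
  split
  · constructor <;> omega
  · rename_i h0
    have hp : 0 < (p:ℕ) := Nat.pos_of_ne_zero h0
    have hj : (p:ℕ) - 1 < m := by have := p.2; omega
    have h1 : ((p.succAbove ⟨(p:ℕ) - 1, hj⟩ : Fin (m+1)) : ℕ) = (p:ℕ) - 1 :=
      succAbove_val_lt m p _ (show (p:ℕ) - 1 < (p:ℕ) by omega)
    have he : (⟨(p:ℕ) - 1, lt_of_le_of_lt (Nat.sub_le _ _) p.2⟩ : Fin (m+1))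
        = p.succAbove ⟨(p:ℕ) - 1, hj⟩ := by
      apply Fin.ext
      show (p:ℕ) - 1 = _
      rw [h1]
    rw [he, sv_ins_succAbove]
    exact signedVal_le m σ ε _

lemma dsc_ins_self_iff (m : ℕ) (p : Fin (m+1)) (s : Bool) (σ : Equiv.Perm (Fin m))
    (ε : Fin m → Bool) :
    dsc (m+1) (insP m p σ) (insE m p s ε) p ↔ s = true := by
  unfold dsc
  rw [sv_ins_self]
  have hb := prevV_ins_self_bound m p s σ ε
  cases s <;> simp <;> omega

lemma dsc_ins_succAbove (m : ℕ) (p : Fin (m+1)) (s : Bool) (σ : Equiv.Perm (Fin m))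
    (ε : Fin m → Bool) (j : Fin m) (hne : (j:ℕ) ≠ (p:ℕ)) :
    dsc (m+1) (insP m p σ) (insE m p s ε) (p.succAbove j) ↔ dsc m σ ε j := by
  unfold dsc
  rw [prevV_ins_succAbove m p s σ ε j hne, sv_ins_succAbove]

lemma dsc_ins_succAbove_eq (m : ℕ) (p : Fin (m+1)) (s : Bool) (σ : Equiv.Perm (Fin m))
    (ε : Fin m → Bool) (j : Fin m) (heq : (j:ℕ) = (p:ℕ)) :
    dsc (m+1) (insP m p σ) (insE m p s ε) (p.succAbove j) ↔ s = false := by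
  unfold dsc
  rw [prevV_ins_succAbove_eq m p s σ ε j heq, sv_ins_succAbove]
  have hb := signedVal_le m σ ε j
  cases s <;> simp <;> omega

lemma desB_ins_last (m : ℕ) (s : Bool) (σ : Equiv.Perm (Fin m)) (ε : Fin m → Bool) :
    desB (m+1) (insP m (Fin.last m) σ) (insE m (Fin.last m) s ε) = desB m σ ε + s.toNat := by
  rw [desB_eq_sum, desB_eq_sum, Fin.sum_univ_succAbove _ (Fin.last m)]
  have h1 : (if dsc (m+1) (insP m (Fin.last m) σ) (insE m (Fin.last m) s ε) (Fin.last m)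
      then 1 else 0) = s.toNat := by
    rw [if_congr (dsc_ins_self_iff m (Fin.last m) s σ ε) rfl rfl]
    cases s <;> simp
  have h2 : ∀ j : Fin m,
      (if dsc (m+1) (insP m (Fin.last m) σ) (insE m (Fin.last m) s ε) ((Fin.last m).succAbove j)
        then 1 else 0) = (if dsc m σ ε j then 1 else 0) := by
    intro j
    exact if_congr (dsc_ins_succAbove m (Fin.last m) s σ ε j (by rw [Fin.val_last]; exact Nat.ne_of_lt j.2))
      rfl rfl
  rw [h1, Finset.sum_congr rfl fun j _ => h2 j]
  exact Nat.add_comm _ _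

lemma desB_ins_castSucc (m : ℕ) (q : Fin m) (s : Bool) (σ : Equiv.Perm (Fin m))
    (ε : Fin m → Bool) :
    desB (m+1) (insP m q.castSucc σ) (insE m q.castSucc s ε)
      = desB m σ ε + (if dsc m σ ε q then 0 else 1) := by
  rw [desB_eq_sum, desB_eq_sum, Fin.sum_univ_succAbove _ q.castSucc]
  have h1 : (if dsc (m+1) (insP m q.castSucc σ) (insE m q.castSucc s ε) q.castSucc
      then 1 else 0) = s.toNat := by
    rw [if_congr (dsc_ins_self_iff m q.castSucc s σ ε) rfl rfl]
    cases s <;> simp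
  have h2 : ∀ j : Fin m,
      (if dsc (m+1) (insP m q.castSucc σ) (insE m q.castSucc s ε) (q.castSucc.succAbove j)
        then (1:ℕ) else 0)
      = (if j = q then (if s then 0 else 1) else (if dsc m σ ε j then 1 else 0)) := by
    intro j
    by_cases hj : j = q
    · subst hj
      rw [if_pos rfl,
        if_congr (dsc_ins_succAbove_eq m j.castSucc s σ ε j rfl) rfl rfl]
      cases s <;> simp
    · rw [if_neg hj,
        if_congr (dsc_ins_succAbove m q.castSucc s σ ε j
          (by simpa [Fin.val_eq_val] using hj)) rfl rfl]
  rw [h1, Finset.sum_congr rfl fun j _ => h2 j]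
  rw [← Finset.add_sum_erase Finset.univ _ (Finset.mem_univ q),
    ← Finset.add_sum_erase Finset.univ (fun j => if dsc m σ ε j then (1:ℕ) else 0)
      (Finset.mem_univ q)]
  rw [if_pos rfl]
  have h3 : ∑ j ∈ Finset.univ.erase q,
      (if j = q then (if s then (0:ℕ) else 1) else (if dsc m σ ε j then 1 else 0))
      = ∑ j ∈ Finset.univ.erase q, (if dsc m σ ε j then 1 else 0) :=
    Finset.sum_congr rfl fun j hj => by
      rw [if_neg (Finset.ne_of_mem_erase hj)]
  rw [h3]
  by_cases hd : dsc m σ ε q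
  · rw [if_pos hd, if_pos hd]
    cases s <;> simp [Bool.toNat] <;> ring
  · rw [if_neg hd, if_neg hd]
    cases s <;> simp [Bool.toNat] <;> ring

def insF (m : ℕ) :
    (Fin (m+1) × Bool) × (Equiv.Perm (Fin m) × (Fin m → Bool)) →
      Equiv.Perm (Fin (m+1)) × (Fin (m+1) → Bool) :=
  fun z => (insP m z.1.1 z.2.1, insE m z.1.1 z.1.2 z.2.2)

lemma insF_bijective (m : ℕ) : Function.Bijective (insF m) := by
  rw [Fintype.bijective_iff_injective_and_card]
  constructor
  · rintro ⟨⟨p, s⟩, ⟨σ, ε⟩⟩ ⟨⟨p', s'⟩, ⟨σ', ε'⟩⟩ hab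
    have h1 : insP m p σ = insP m p' σ' := congrArg Prod.fst hab
    have h2 : insE m p s ε = insE m p' s' ε' := congrArg Prod.snd hab
    have hp : p = p' := by
      have e1 : insP m p' σ' p = Fin.last m := by rw [← h1, insP_self]
      have e2 : insP m p' σ' p' = Fin.last m := insP_self m p' σ'
      exact (insP m p' σ').injective (e1.trans e2.symm)
    subst hp
    have hσ : σ = σ' := by
      apply Equiv.ext
      intro j
      have e1 : Fin.castSucc (σ j) = Fin.castSucc (σ' j) := by
        rw [← insP_succAbove m p σ j, ← insP_succAbove m p σ' j, h1]
      exact Fin.castSucc_injective m e1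
    have hs : s = s' := by
      have := congrFun h2 p
      rwa [insE_self, insE_self] at this
    have hε : ε = ε' := by
      funext j
      have := congrFun h2 (p.succAbove j)
      rwa [insE_succAbove, insE_succAbove] at this
    simp [hσ, hs, hε]
  · simp only [Fintype.card_prod, Fintype.card_perm, Fintype.card_fun, Fintype.card_bool,
      Fintype.card_fin, Nat.factorial_succ]
    ring

lemma sum_ins (m : ℕ) (f : Equiv.Perm (Fin (m+1)) → (Fin (m+1) → Bool) → ℝ) :
    (∑ σ : Equiv.Perm (Fin (m+1)), ∑ ε : Fin (m+1) → Bool, f σ ε)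
      = ∑ p : Fin (m+1), ∑ s : Bool, ∑ σ : Equiv.Perm (Fin m), ∑ ε : Fin m → Bool,
          f (insP m p σ) (insE m p s ε) := by
  have h1 : (∑ σ : Equiv.Perm (Fin (m+1)), ∑ ε : Fin (m+1) → Bool, f σ ε)
      = ∑ w : Equiv.Perm (Fin (m+1)) × (Fin (m+1) → Bool), f w.1 w.2 := by
    rw [Fintype.sum_prod_type]
  have h2 := Function.Bijective.sum_comp (insF_bijective m) (fun w => f w.1 w.2)
  rw [h1, ← h2]
  rw [Fintype.sum_prod_type, Fintype.sum_prod_type]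
  apply Finset.sum_congr rfl
  intro p _
  apply Finset.sum_congr rfl
  intro s _
  rw [Fintype.sum_prod_type]
  rfl

lemma desB_le (m : ℕ) (σ : Equiv.Perm (Fin m)) (ε : Fin m → Bool) : desB m σ ε ≤ m := by
  rw [desB_eq_sum]
  have h1 : (∑ i : Fin m, if dsc m σ ε i then (1:ℕ) else 0) ≤ ∑ _i : Fin m, 1 :=
    Finset.sum_le_sum fun i _ => by split <;> norm_num
  simpa using h1

lemma sum_step (m : ℕ) (x : ℝ) (σ : Equiv.Perm (Fin m)) (ε : Fin m → Bool) :
    (∑ p : Fin (m+1), ∑ s : Bool, x ^ desB (m+1) (insP m p σ) (insE m p s ε))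
      = ((2 * desB m σ ε + 1 : ℕ) : ℝ) * x ^ desB m σ ε
        + ((2 * (m - desB m σ ε) + 1 : ℕ) : ℝ) * x ^ (desB m σ ε + 1) := by
  set d := desB m σ ε with hd
  rw [Fin.sum_univ_castSucc
    (f := fun p => ∑ s : Bool, x ^ desB (m+1) (insP m p σ) (insE m p s ε))]
  have hlast : (∑ s : Bool, x ^ desB (m+1) (insP m (Fin.last m) σ) (insE m (Fin.last m) s ε))
      = x ^ d + x ^ (d+1) := by
    rw [Fintype.sum_bool]
    rw [desB_ins_last, desB_ins_last]
    simp [Bool.toNat]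
    ring
  have hcast : ∀ q : Fin m,
      (∑ s : Bool, x ^ desB (m+1) (insP m q.castSucc σ) (insE m q.castSucc s ε))
        = 2 * (if dsc m σ ε q then x ^ d else x ^ (d+1)) := by
    intro q
    rw [Fintype.sum_bool, desB_ins_castSucc, desB_ins_castSucc]
    by_cases hq : dsc m σ ε q
    · rw [if_pos hq, if_pos hq]; ring
    · rw [if_neg hq, if_neg hq]; ring
  rw [hlast, Finset.sum_congr rfl fun q _ => hcast q]
  rw [← Finset.mul_sum]
  have hsum : ((d:ℝ)) = ∑ q : Fin m, (if dsc m σ ε q then (1:ℝ) else 0) := by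
    rw [hd, desB_eq_sum m σ ε]
    push_cast
    rfl
  have key : (∑ q : Fin m, (if dsc m σ ε q then x ^ d else x ^ (d+1)))
      = (d:ℝ) * x ^ d + ((m:ℝ) - d) * x ^ (d+1) := by
    have step : ∀ q : Fin m, (if dsc m σ ε q then x ^ d else x ^ (d+1))
        = (if dsc m σ ε q then (1:ℝ) else 0) * (x ^ d - x ^ (d+1)) + x ^ (d+1) := by
      intro q
      by_cases hq : dsc m σ ε q
      · rw [if_pos hq, if_pos hq]; ring
      · rw [if_neg hq, if_neg hq]; ring
    rw [Finset.sum_congr rfl fun q _ => step q, Finset.sum_add_distrib,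
      ← Finset.sum_mul, ← hsum, Finset.sum_const, Finset.card_univ, Fintype.card_fin,
      nsmul_eq_mul]
    ring
  rw [key]
  have hdm : (d:ℝ) ≤ (m:ℝ) := by
    have := desB_le m σ ε
    exact_mod_cast this
  rw [Nat.cast_add, Nat.cast_add, Nat.cast_mul, Nat.cast_mul,
    Nat.cast_sub (desB_le m σ ε)]
  push_cast
  ring

lemma xpow_shift (x : ℝ) (k : ℕ) : x * ((k:ℝ) * x^(k-1)) = (k:ℝ) * x^k := by
  cases k with
  | zero => simp
  | succ k' =>
    rw [Nat.add_sub_cancel]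
    ring

lemma b_vanish (b : ℕ → ℤ → ℝ) (hb1 : b 1 0 = 1) (hb1' : ∀ k : ℤ, k ≠ 0 → b 1 k = 0)
    (hbrec : ∀ n : ℕ, 2 ≤ n → ∀ k : ℤ,
      b n k = (2 * k + 1) * b (n - 1) k + 4 * (n + 1 - 2 * k) * b (n - 1) (k - 1)) :
    ∀ m : ℕ, 1 ≤ m → ∀ k : ℤ, (k < 0 ∨ (m:ℤ) < 2*k) → b m k = 0 := by
  refine Nat.le_induction ?_ ?_
  · intro k hk
    apply hb1'
    omega
  · intro m hm ih k hk
    have hrec := hbrec (m+1) (by omega) k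
    rw [Nat.add_sub_cancel] at hrec
    rw [hrec]
    have h1 : b m k = 0 := ih k (by omega)
    rcases hk with hk | hk
    · have h2 : b m (k-1) = 0 := ih (k-1) (by omega)
      rw [h1, h2]; ring
    · by_cases h3 : (m:ℤ) < 2*(k-1)
      · have h2 : b m (k-1) = 0 := ih (k-1) (Or.inr h3)
        rw [h1, h2]; ring
      · have h5 : (2*k:ℤ) = (m:ℤ)+2 := by omega
        have h6 := congrArg (Int.cast : ℤ → ℝ) h5
        push_cast at h6
        have h4 : ((m+1:ℕ):ℝ) + 1 - 2*(k:ℝ) = 0 := by push_cast; linarith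
        rw [h1, h4]; ring

lemma desB_one (σ : Equiv.Perm (Fin 1)) (ε : Fin 1 → Bool) :
    desB 1 σ ε = if ε 0 then 1 else 0 := by
  rw [desB_eq_sum, Fin.sum_univ_one]
  have h0 : dsc 1 σ ε 0 ↔ ε 0 = true := by
    unfold dsc prevV
    rw [dif_pos (show ((0:Fin 1):ℕ) = 0 from rfl)]
    unfold signedVal
    have hpos : (0:ℤ) < ((σ 0 : ℕ):ℤ) + 1 := by positivity
    cases hε : ε 0
    · rw [if_neg (by simp)]
      apply iff_of_false
      · omega
      · simp
    · rw [if_pos rfl]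
      apply iff_of_true
      · omega
      · rfl
  rw [if_congr h0 rfl rfl]

lemma gamma_step (m k : ℕ) (hk : 2*k ≤ m) (x c : ℝ) :
    (1 + (2*(m:ℝ)+1)*x) * (c * x^k * (1+x)^(m-2*k))
      + 2*x*(1-x) * ((c * ((k:ℝ) * x^(k-1))) * (1+x)^(m-2*k)
          + (c * x^k) * (((m-2*k : ℕ):ℝ) * (1+x)^(m-2*k-1) * 1))
    = (2*(k:ℝ)+1) * (c * x^k * (1+x)^(m+1-2*k))
      + 4*((m-2*k : ℕ):ℝ) * (c * x^(k+1) * (1+x)^(m+1-2*(k+1))) := by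
  obtain ⟨e, rfl⟩ : ∃ e, m = 2*k + e := ⟨m - 2*k, by omega⟩
  have h0 : 2*k + e - 2*k = e := by omega
  have h1 : 2*k + e + 1 - 2*k = e + 1 := by omega
  have h2 : 2*k + e + 1 - 2*(k+1) = e - 1 := by omega
  rw [h0, h1, h2]
  cases e with
  | zero =>
    push_cast
    simp only [pow_zero, Nat.zero_sub, Nat.cast_zero]
    linear_combination (2*(1-x)*c) * xpow_shift x k
  | succ e' =>
    have h3 : e' + 1 - 1 = e' := by omega
    rw [h3]
    push_cast
    linear_combination (2*(1-x)*c*(1+x)^(e'+1)) * xpow_shift x k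

lemma sum_swap4 {α β γ δ : Type*} [Fintype α] [Fintype β] [Fintype γ] [Fintype δ]
    (g : α → β → γ → δ → ℝ) :
    (∑ a : α, ∑ b : β, ∑ c : γ, ∑ d : δ, g a b c d)
      = ∑ c : γ, ∑ d : δ, ∑ a : α, ∑ b : β, g a b c d := by
  have s1 : (∑ a : α, ∑ b : β, ∑ c : γ, ∑ d : δ, g a b c d)
      = ∑ a : α, ∑ c : γ, ∑ b : β, ∑ d : δ, g a b c d :=
    Finset.sum_congr rfl fun a _ => Finset.sum_comm
  have s2 : (∑ a : α, ∑ c : γ, ∑ b : β, ∑ d : δ, g a b c d)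
      = ∑ c : γ, ∑ a : α, ∑ b : β, ∑ d : δ, g a b c d := Finset.sum_comm
  have s3 : (∑ c : γ, ∑ a : α, ∑ b : β, ∑ d : δ, g a b c d)
      = ∑ c : γ, ∑ a : α, ∑ d : δ, ∑ b : β, g a b c d :=
    Finset.sum_congr rfl fun c _ => Finset.sum_congr rfl fun a _ => Finset.sum_comm
  have s4 : (∑ c : γ, ∑ a : α, ∑ d : δ, ∑ b : β, g a b c d)
      = ∑ c : γ, ∑ d : δ, ∑ a : α, ∑ b : β, g a b c d :=
    Finset.sum_congr rfl fun c _ => Finset.sum_comm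
  rw [s1, s2, s3, s4]

/-- The gamma-expansion of the type `B` Eulerian polynomial
`B_n(x) = Σ_{π ∈ B_n} x^{des_B(π)} = Σ_{k=0}^{⌊n/2⌋} b(n,k) x^k (1+x)^{n−2k}`,
where `b(1,0)=1`, `b(1,k)=0` for `k ≥ 1` (and `b(n,k)=0` for `k < 0`), and
`b(n,k) = (2k+1)b(n−1,k) + 4(n+1−2k)b(n−1,k−1)` for `n ≥ 2`. -/
theorem eulerianB_gamma_expansion (b : ℕ → ℤ → ℝ)
    (hb1 : b 1 0 = 1) (hb1' : ∀ k : ℤ, k ≠ 0 → b 1 k = 0)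
    (hbrec : ∀ n : ℕ, 2 ≤ n → ∀ k : ℤ,
      b n k = (2 * k + 1) * b (n - 1) k + 4 * (n + 1 - 2 * k) * b (n - 1) (k - 1)) :
    ∀ n : ℕ, 1 ≤ n → ∀ x : ℝ,
      (∑ σ : Equiv.Perm (Fin n), ∑ ε : Fin n → Bool, x ^ desB n σ ε) =
        ∑ k ∈ Finset.range (n / 2 + 1),
          b n k * x ^ k * (1 + x) ^ (n - 2 * k) := by
  refine Nat.le_induction ?_ ?_
  · -- base case n = 1
    intro x
    have hσ : ∀ σ : Equiv.Perm (Fin 1), (∑ ε : Fin 1 → Bool, x ^ desB 1 σ ε) = 1 + x := by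
      intro σ
      rw [Finset.sum_congr rfl (fun ε _ => by rw [desB_one σ ε])]
      rw [← Equiv.sum_comp (Equiv.funUnique (Fin 1) Bool).symm
        (fun ε => x ^ (if ε 0 then 1 else 0))]
      rw [Fintype.sum_bool]
      simp [Equiv.funUnique]
      try ring
    rw [Finset.sum_congr rfl fun σ _ => hσ σ, Finset.sum_const, Finset.card_univ]
    rw [Finset.sum_range_one]
    simp [Fintype.card_perm, hb1]
    try ring
  · -- induction step : from m to m + 1
    intro m hm ih x
    -- Step A : combinatorial insertion
    have hA : (∑ σ : Equiv.Perm (Fin (m+1)), ∑ ε : Fin (m+1) → Bool, x ^ desB (m+1) σ ε)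
        = ∑ σ : Equiv.Perm (Fin m), ∑ ε : Fin m → Bool,
            (((2 * desB m σ ε + 1 : ℕ):ℝ) * x ^ desB m σ ε
              + ((2 * (m - desB m σ ε) + 1 : ℕ):ℝ) * x ^ (desB m σ ε + 1)) := by
      rw [sum_ins m (fun σ ε => x ^ desB (m+1) σ ε)]
      rw [sum_swap4 (fun (p : Fin (m+1)) (s : Bool) (σ : Equiv.Perm (Fin m))
        (ε : Fin m → Bool) => x ^ desB (m+1) (insP m p σ) (insE m p s ε))]
      exact Finset.sum_congr rfl fun σ _ => Finset.sum_congr rfl fun ε _ => sum_step m x σ ε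
    -- derivative of the combinatorial side
    have hF : ∀ y : ℝ, HasDerivAt
        (fun t : ℝ => ∑ σ : Equiv.Perm (Fin m), ∑ ε : Fin m → Bool, t ^ desB m σ ε)
        (∑ σ : Equiv.Perm (Fin m), ∑ ε : Fin m → Bool,
          ((desB m σ ε : ℝ) * y ^ (desB m σ ε - 1))) y := by
      intro y
      apply HasDerivAt.fun_sum
      intro σ _
      apply HasDerivAt.fun_sum
      intro ε _
      exact hasDerivAt_pow _ y
    have hG : ∀ y : ℝ, HasDerivAt
        (fun t : ℝ => ∑ k ∈ Finset.range (m/2+1), b m k * t ^ k * (1+t) ^ (m - 2*k))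
        (∑ k ∈ Finset.range (m/2+1),
          ((b m k * ((k:ℝ) * y ^ (k-1))) * (1+y) ^ (m-2*k)
            + (b m k * y ^ k) * (((m-2*k : ℕ):ℝ) * (1+y) ^ (m-2*k-1) * 1))) y := by
      intro y
      apply HasDerivAt.fun_sum
      intro k _
      exact ((hasDerivAt_pow k y).const_mul (b m (k:ℤ))).mul
        (((hasDerivAt_id y).const_add 1).pow (m - 2*k))
    have hfun : (fun t : ℝ => ∑ σ : Equiv.Perm (Fin m), ∑ ε : Fin m → Bool, t ^ desB m σ ε)
        = (fun t : ℝ => ∑ k ∈ Finset.range (m/2+1), b m k * t ^ k * (1+t) ^ (m - 2*k)) :=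
      funext ih
    have hder : (∑ σ : Equiv.Perm (Fin m), ∑ ε : Fin m → Bool,
          ((desB m σ ε : ℝ) * x ^ (desB m σ ε - 1)))
        = ∑ k ∈ Finset.range (m/2+1),
          ((b m k * ((k:ℝ) * x ^ (k-1))) * (1+x) ^ (m-2*k)
            + (b m k * x ^ k) * (((m-2*k : ℕ):ℝ) * (1+x) ^ (m-2*k-1) * 1)) := by
      have h1 := hF x
      rw [hfun] at h1
      exact h1.unique (hG x)
    -- Step C : rewrite combinatorial sum via value and derivative
    have hC : (∑ σ : Equiv.Perm (Fin m), ∑ ε : Fin m → Bool,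
            (((2 * desB m σ ε + 1 : ℕ):ℝ) * x ^ desB m σ ε
              + ((2 * (m - desB m σ ε) + 1 : ℕ):ℝ) * x ^ (desB m σ ε + 1)))
        = (1 + (2*(m:ℝ)+1)*x) * (∑ σ : Equiv.Perm (Fin m), ∑ ε : Fin m → Bool, x ^ desB m σ ε)
          + 2*x*(1-x) * (∑ σ : Equiv.Perm (Fin m), ∑ ε : Fin m → Bool,
              ((desB m σ ε : ℝ) * x ^ (desB m σ ε - 1))) := by
      rw [Finset.mul_sum, Finset.mul_sum, ← Finset.sum_add_distrib]
      refine Finset.sum_congr rfl fun σ _ => ?_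
      rw [Finset.mul_sum, Finset.mul_sum, ← Finset.sum_add_distrib]
      refine Finset.sum_congr rfl fun ε _ => ?_
      have hdm := desB_le m σ ε
      push_cast [Nat.cast_sub hdm]
      linear_combination (2*(x-1)) * xpow_shift x (desB m σ ε)
    rw [hA, hC, ih x, hder]
    -- Step D : gamma-side algebra
    have hmem : ∀ k ∈ Finset.range (m/2+1), 2*k ≤ m := by
      intro k hk
      have := Finset.mem_range.mp hk
      omega
    rw [Finset.mul_sum, Finset.mul_sum, ← Finset.sum_add_distrib]
    have hD : ∀ k ∈ Finset.range (m/2+1),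
        (1 + (2*(m:ℝ)+1)*x) * (b m k * x ^ k * (1+x) ^ (m - 2*k))
          + 2*x*(1-x) * ((b m k * ((k:ℝ) * x ^ (k-1))) * (1+x) ^ (m-2*k)
            + (b m k * x ^ k) * (((m-2*k : ℕ):ℝ) * (1+x) ^ (m-2*k-1) * 1))
        = (2*(k:ℝ)+1) * (b m k * x^k * (1+x)^(m+1-2*k))
          + 4*((m-2*k : ℕ):ℝ) * (b m k * x^(k+1) * (1+x)^(m+1-2*(k+1))) := by
      intro k hk
      exact gamma_step m k (hmem k hk) x (b m k)
    rw [Finset.sum_congr rfl hD, Finset.sum_add_distrib]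
    -- name the two pieces
    have hstep : ∀ k : ℕ, b (m+1) (k:ℤ) = (2*(k:ℝ)+1) * b m k
        + 4*(((m:ℝ)+2) - 2*(k:ℝ)) * b m ((k:ℤ)-1) := by
      intro k
      have := hbrec (m+1) (by omega) (k:ℤ)
      rw [Nat.add_sub_cancel] at this
      rw [this]
      push_cast
      ring_nf
    -- extend target sum to range (m/2+2)
    have htar : (∑ k ∈ Finset.range ((m+1)/2+1), b (m+1) k * x ^ k * (1+x) ^ (m+1 - 2*k))
        = ∑ k ∈ Finset.range (m/2+2), b (m+1) k * x ^ k * (1+x) ^ (m+1 - 2*k) := by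
      rcases (by omega : (m+1)/2+1 = m/2+2 ∨ (m+1)/2+1 = m/2+1) with h | h
      · rw [h]
      · rw [h]
        rw [show m/2+2 = (m/2+1)+1 from rfl]
        conv_rhs => rw [Finset.sum_range_succ]
        have hz : b (m+1) ((m/2+1 : ℕ):ℤ) = 0 := by
          apply b_vanish b hb1 hb1' hbrec (m+1) (by omega)
          right
          push_cast
          omega
        rw [hz]
        simp
    rw [htar]
    have hsplit : (∑ k ∈ Finset.range (m/2+2), b (m+1) k * x ^ k * (1+x) ^ (m+1 - 2*k))
        = (∑ k ∈ Finset.range (m/2+2), (2*(k:ℝ)+1) * b m k * x ^ k * (1+x) ^ (m+1 - 2*k))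
          + ∑ k ∈ Finset.range (m/2+2),
              4*(((m:ℝ)+2) - 2*(k:ℝ)) * b m ((k:ℤ)-1) * x ^ k * (1+x) ^ (m+1 - 2*k) := by
      rw [← Finset.sum_add_distrib]
      refine Finset.sum_congr rfl fun k _ => ?_
      rw [hstep k]
      ring
    rw [hsplit]
    congr 1
    · -- first piece equals the (2k+1) sum
      rw [show m/2+2 = (m/2+1)+1 from rfl]
      conv_rhs => rw [Finset.sum_range_succ]
      have hz : b m ((m/2+1 : ℕ):ℤ) = 0 := by
        apply b_vanish b hb1 hb1' hbrec m (by omega)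
        right
        push_cast
        omega
      rw [hz]
      simp only [mul_zero, zero_mul, add_zero]
      refine Finset.sum_congr rfl fun k hk => ?_
      ring
    · -- second piece equals the 4(m-2k) sum
      rw [show m/2+2 = (m/2+1)+1 from rfl]
      conv_rhs => rw [Finset.sum_range_succ']
      have hz0 : b m (((0:ℕ):ℤ) - 1) = 0 := by
        apply b_vanish b hb1 hb1' hbrec m (by omega)
        left
        norm_num
      rw [hz0]
      simp only [mul_zero, zero_mul, add_zero]
      refine Finset.sum_congr rfl fun j hj => ?_
      have h2j : 2*j ≤ m := by
        have := Finset.mem_range.mp hj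
        omega
      have hb' : b m (((j+1:ℕ):ℤ) - 1) = b m (j:ℤ) :=
        congrArg (b m) (by push_cast; ring)
      rw [hb', Nat.cast_sub h2j]
      push_cast
      ring
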